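/- Let A be a finite set and R ⊆ A² a symmetric irreflexive binary relation such that every element of A occurs in some pair of R. Then R is reconfigurable if and only if the simple graph on vertex set A with edge relation R is connected and not bipartite (i.e. admits no proper 2-colouring). -/

import Mathlib

/-- The reconfiguration graph of a binary relation `R ⊆ A²`: vertices are the pairs of `R`,
two pairs being adjacent iff they differ in exactly one coordinate. -/
def pairReconfGraph {A : Type*} (R : Set (A × A)) : SimpleGraph R where
  Adj x y := (x.1.1 = y.1.1 ∧ x.1.2 ≠ y.1.2) ∨ (x.1.1 ≠ y.1.1 ∧ x.1.2 = y.1.2)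
  symm := by
    refine ⟨?_⟩
    rintro x y (⟨h1, h2⟩ | ⟨h1, h2⟩)
    · exact Or.inl ⟨h1.symm, Ne.symm h2⟩
    · exact Or.inr ⟨Ne.symm h1, h2.symm⟩
  loopless := by
    refine ⟨?_⟩
    rintro x (⟨-, h⟩ | ⟨h, -⟩) <;> exact h rfl

/-- The simple graph on `A` whose edge relation is the symmetric irreflexive relation `R`. -/
def relGraph {A : Type*} (R : Set (A × A)) (hsym : ∀ a b : A, (a, b) ∈ R → (b, a) ∈ R)
    (hirr : ∀ a : A, (a, a) ∉ R) : SimpleGraph A where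
  Adj a b := (a, b) ∈ R
  symm := ⟨fun a b h => hsym a b h⟩
  loopless := ⟨fun a h => hirr a h⟩

section Aux

variable {A : Type*} {R : Set (A × A)}

/-- Changing the second coordinate (keeping the first) gives reachable pairs. -/
lemma reach_snd_change (a b b' : A) (h : (a, b) ∈ R) (h' : (a, b') ∈ R) :
    (pairReconfGraph R).Reachable ⟨(a, b), h⟩ ⟨(a, b'), h'⟩ := by
  by_cases hb : b = b'
  · subst hb; exact SimpleGraph.Reachable.refl _
  · exact SimpleGraph.Adj.reachable (Or.inl ⟨rfl, hb⟩)

/-- The swap map as a graph homomorphism of the pair reconfiguration graph. -/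
def swapHom (hsym : ∀ a b : A, (a, b) ∈ R → (b, a) ∈ R) :
    pairReconfGraph R →g pairReconfGraph R where
  toFun := fun x => ⟨(x.1.2, x.1.1), hsym x.1.1 x.1.2 (by simpa using x.2)⟩
  map_rel' := by
    rintro x y (⟨h1, h2⟩ | ⟨h1, h2⟩)
    · exact Or.inr ⟨h2, h1⟩
    · exact Or.inl ⟨h2, h1⟩

lemma reach_swap (hsym : ∀ a b : A, (a, b) ∈ R → (b, a) ∈ R)
    {a b c d : A} (hab : (a, b) ∈ R) (hcd : (c, d) ∈ R)
    (hba : (b, a) ∈ R) (hdc : (d, c) ∈ R)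
    (h : (pairReconfGraph R).Reachable ⟨(a, b), hab⟩ ⟨(c, d), hcd⟩) :
    (pairReconfGraph R).Reachable ⟨(b, a), hba⟩ ⟨(d, c), hdc⟩ :=
  h.map (swapHom hsym)

/-- Key lemma: walks in the relation graph transport reachability in the
pair reconfiguration graph, with the parity of the walk controlling the
orientation of the target pair. -/
lemma key_walk (hsym : ∀ a b : A, (a, b) ∈ R → (b, a) ∈ R)
    (hirr : ∀ a : A, (a, a) ∉ R) :
    ∀ {a a' : A} (w : (relGraph R hsym hirr).Walk a a'),
      (∀ (_ : Even w.length) (b b' : A) (hb : (a, b) ∈ R) (hb' : (a', b') ∈ R),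
        (pairReconfGraph R).Reachable ⟨(a, b), hb⟩ ⟨(a', b'), hb'⟩) ∧
      (∀ (_ : Odd w.length) (b b' : A) (hb : (a, b) ∈ R) (hb' : (b', a') ∈ R),
        (pairReconfGraph R).Reachable ⟨(a, b), hb⟩ ⟨(b', a'), hb'⟩) := by
  intro a a' w
  induction w with
  | nil =>
    constructor
    · intro _ b b' hb hb'
      exact reach_snd_change _ _ _ hb hb'
    · intro hO
      simp [Nat.odd_iff] at hO
  | @cons a m a' h p ih =>
    have ham : (a, m) ∈ R := h
    have hma : (m, a) ∈ R := hsym a m h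
    constructor
    · intro hE b b' hb hb'
      have hO : Odd p.length := by
        have := hE
        simp only [SimpleGraph.Walk.length_cons, Nat.even_iff] at this
        simp [Nat.odd_iff]; omega
      have hb'a' : (b', a') ∈ R := hsym a' b' hb'
      have r1 := ih.2 hO a b' hma hb'a'
      have r1' := reach_swap hsym hma hb'a' ham hb' r1
      exact (reach_snd_change a b m hb ham).trans r1'
    · intro hO b b' hb hb'
      have hE : Even p.length := by
        simp only [SimpleGraph.Walk.length_cons, Nat.odd_iff] at hO
        simp [Nat.even_iff]; omega
      have ha'b' : (a', b') ∈ R := hsym b' a' hb'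
      have r1 := ih.1 hE a b' hma ha'b'
      have r1' := reach_swap hsym hma ha'b' ham hb' r1
      exact (reach_snd_change a b m hb ham).trans r1'

/-- In a connected non-2-colourable graph, any two vertices are joined by an
even-length walk. -/
lemma even_walk_of_not_colorable {G : SimpleGraph A} (hc : G.Connected)
    (hnc : ¬ G.Colorable 2) (u v : A) : ∃ w : G.Walk u v, Even w.length := by
  classical
  obtain ⟨a0⟩ := hc.nonempty
  have hodd : ∃ W : G.Walk a0 a0, Odd W.length := by
    by_contra hW
    push_neg at hW
    apply hnc
    refine ⟨SimpleGraph.Coloring.mk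
      (fun x => if ∃ w : G.Walk a0 x, Even w.length then 0 else 1) ?_⟩
    intro x y hadj heq
    by_cases hx : ∃ w : G.Walk a0 x, Even w.length
    · by_cases hy : ∃ w : G.Walk a0 y, Even w.length
      · obtain ⟨p, hp⟩ := hx
        obtain ⟨q, hq⟩ := hy
        refine hW (p.append (SimpleGraph.Walk.cons hadj q.reverse)) ?_
        simp only [SimpleGraph.Walk.length_append, SimpleGraph.Walk.length_cons,
          SimpleGraph.Walk.length_reverse]
        rw [Nat.even_iff] at hp hq
        rw [Nat.odd_iff]; omega
      · simp [hx, hy] at heq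
    · by_cases hy : ∃ w : G.Walk a0 y, Even w.length
      · simp [hx, hy] at heq
      · obtain ⟨p⟩ := hc.preconnected a0 x
        obtain ⟨q⟩ := hc.preconnected a0 y
        have hp : ¬ Even p.length := fun h => hx ⟨p, h⟩
        have hq : ¬ Even q.length := fun h => hy ⟨q, h⟩
        refine hW (p.append (SimpleGraph.Walk.cons hadj q.reverse)) ?_
        simp only [SimpleGraph.Walk.length_append, SimpleGraph.Walk.length_cons,
          SimpleGraph.Walk.length_reverse]
        rw [Nat.even_iff] at hp hq
        rw [Nat.odd_iff]; omega
  obtain ⟨W, hWodd⟩ := hodd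
  obtain ⟨p⟩ := hc.preconnected u a0
  obtain ⟨q⟩ := hc.preconnected a0 v
  by_cases hpar : Even (p.length + q.length)
  · exact ⟨p.append q, by simpa [SimpleGraph.Walk.length_append] using hpar⟩
  · refine ⟨p.append (W.append q), ?_⟩
    simp only [SimpleGraph.Walk.length_append]
    rw [Nat.even_iff] at hpar ⊢
    rw [Nat.odd_iff] at hWodd
    omega

/-- Reachability in the pair reconfiguration graph implies reachability of the
first coordinates in the relation graph. -/
lemma fst_reach (hsym : ∀ a b : A, (a, b) ∈ R → (b, a) ∈ R)
    (hirr : ∀ a : A, (a, a) ∉ R) {p q : R}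
    (h : (pairReconfGraph R).Reachable p q) :
    (relGraph R hsym hirr).Reachable p.1.1 q.1.1 := by
  obtain ⟨w⟩ := h
  induction w with
  | nil => exact SimpleGraph.Reachable.refl _
  | @cons x y z hadj w ih =>
    refine SimpleGraph.Reachable.trans ?_ ih
    rcases hadj with ⟨h1, _⟩ | ⟨_, h2⟩
    · rw [h1]
    · have hx : (relGraph R hsym hirr).Adj x.1.1 x.1.2 := by
        show (x.1.1, x.1.2) ∈ R; simpa using x.2
      have hy : (relGraph R hsym hirr).Adj y.1.1 y.1.2 := by
        show (y.1.1, y.1.2) ∈ R; simpa using y.2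
      rw [h2] at hx
      exact hx.reachable.trans hy.reachable.symm

/-- A 2-colouring's value on first coordinates is invariant along the pair
reconfiguration graph. -/
lemma color_invariant (hsym : ∀ a b : A, (a, b) ∈ R → (b, a) ∈ R)
    (hirr : ∀ a : A, (a, a) ∉ R)
    (c : (relGraph R hsym hirr).Coloring (Fin 2)) {p q : R}
    (h : (pairReconfGraph R).Reachable p q) : c p.1.1 = c q.1.1 := by
  have fin2 : ∀ x y z : Fin 2, x ≠ z → y ≠ z → x = y := by decide
  obtain ⟨w⟩ := h
  induction w with
  | nil => rfl
  | @cons x y z hadj w ih =>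
    refine Eq.trans ?_ ih
    rcases hadj with ⟨h1, _⟩ | ⟨_, h2⟩
    · rw [h1]
    · have hx : (relGraph R hsym hirr).Adj x.1.1 x.1.2 := by
        show (x.1.1, x.1.2) ∈ R; simpa using x.2
      have hy : (relGraph R hsym hirr).Adj y.1.1 y.1.2 := by
        show (y.1.1, y.1.2) ∈ R; simpa using y.2
      rw [h2] at hx
      exact fin2 _ _ _ (c.valid hx) (c.valid hy)

end Aux

/-- A symmetric irreflexive binary relation `R ⊆ A²` in which every element of `A` occurs
is reconfigurable iff the associated simple graph is connected and not 2-colourable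
(i.e. not bipartite). -/
theorem binary_reconfigurable_iff {A : Type*} [Fintype A] (R : Set (A × A))
    (hsym : ∀ a b : A, (a, b) ∈ R → (b, a) ∈ R) (hirr : ∀ a : A, (a, a) ∉ R)
    (hcover : ∀ a : A, ∃ b : A, (a, b) ∈ R) :
    (pairReconfGraph R).Connected ↔
      (relGraph R hsym hirr).Connected ∧ ¬(relGraph R hsym hirr).Colorable 2 := by
  constructor
  · intro hP
    obtain ⟨⟨⟨a, b⟩, hab⟩⟩ := hP.nonempty
    refine ⟨?_, ?_⟩
    · have : Nonempty A := ⟨a⟩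
      refine ⟨fun u v => ?_⟩
      obtain ⟨bu, hu⟩ := hcover u
      obtain ⟨bv, hv⟩ := hcover v
      exact fst_reach hsym hirr (hP.preconnected ⟨(u, bu), hu⟩ ⟨(v, bv), hv⟩)
    · rintro ⟨c⟩
      have hba : (b, a) ∈ R := hsym a b hab
      have h1 := hP.preconnected ⟨(a, b), hab⟩ ⟨(b, a), hba⟩
      have h2 := color_invariant hsym hirr c h1
      exact c.valid (show (relGraph R hsym hirr).Adj a b from hab) h2
  · rintro ⟨hconn, hnc⟩
    obtain ⟨a0⟩ := hconn.nonempty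
    obtain ⟨b0, hb0⟩ := hcover a0
    have : Nonempty R := ⟨⟨(a0, b0), hb0⟩⟩
    refine ⟨fun p q => ?_⟩
    obtain ⟨⟨a, b⟩, hab⟩ := p
    obtain ⟨⟨a', b'⟩, hab'⟩ := q
    obtain ⟨w, hw⟩ := even_walk_of_not_colorable hconn hnc a a'
    exact (key_walk hsym hirr w).1 hw b b' hab hab'
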